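/- Let γ : ℝ → GL(n,ℝ) be a differentiable curve of symmetric positive-definite matrices, and ε¹, ε² differentiable curves of symmetric matrices. Define D_t ε := ε' - (1/2)(γ' γ⁻¹ ε + ε γ⁻¹ γ'). Then d/dt [tr(γ⁻¹ ε¹ γ⁻¹ ε²)] = tr(γ⁻¹ (D_t ε¹) γ⁻¹ ε²) + tr(γ⁻¹ ε¹ γ⁻¹ (D_t ε²)). (Pointwise compatibility of the Rougée covariant derivative with the Rougée metric.) -/

import Mathlib

open Matrix

attribute [local instance] Matrix.normedAddCommGroup Matrix.normedSpace

section Helpers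
variable {n : ℕ}


lemma entry_hda {A : ℝ → Matrix (Fin n) (Fin n) ℝ} {A' : Matrix (Fin n) (Fin n) ℝ} {t : ℝ}
    (h : HasDerivAt A A' t) (i j : Fin n) :
    HasDerivAt (fun s => A s i j) (A' i j) t :=
  hasDerivAt_pi.1 (hasDerivAt_pi.1 h i) j

lemma matrix_hda {A : ℝ → Matrix (Fin n) (Fin n) ℝ} {A' : Matrix (Fin n) (Fin n) ℝ} {t : ℝ}
    (h : ∀ i j, HasDerivAt (fun s => A s i j) (A' i j) t) :
    HasDerivAt A A' t :=
  hasDerivAt_pi.2 fun i => hasDerivAt_pi.2 fun j => h i j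

lemma mul_hda {A B : ℝ → Matrix (Fin n) (Fin n) ℝ} {A' B' : Matrix (Fin n) (Fin n) ℝ} {t : ℝ}
    (hA : HasDerivAt A A' t) (hB : HasDerivAt B B' t) :
    HasDerivAt (fun s => A s * B s) (A' * B t + A t * B') t := by
  apply matrix_hda
  intro i j
  have h1 : ∀ s, (A s * B s) i j = ∑ k, A s i k * B s k j := fun s => Matrix.mul_apply
  simp only [h1]
  have h2 : (A' * B t + A t * B') i j = ∑ k, (A' i k * B t k j + A t i k * B' k j) := by
    simp [Matrix.mul_apply, Matrix.add_apply, Finset.sum_add_distrib]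
  rw [h2]
  exact HasDerivAt.fun_sum fun k _ => (entry_hda hA i k).mul (entry_hda hB k j)

lemma trace_hda {A : ℝ → Matrix (Fin n) (Fin n) ℝ} {A' : Matrix (Fin n) (Fin n) ℝ} {t : ℝ}
    (h : HasDerivAt A A' t) :
    HasDerivAt (fun s => (A s).trace) A'.trace t := by
  simp only [Matrix.trace, Matrix.diag]
  exact HasDerivAt.fun_sum fun i _ => entry_hda h i i

lemma det_dAt {A : ℝ → Matrix (Fin n) (Fin n) ℝ} {t : ℝ}
    (h : ∀ i j, DifferentiableAt ℝ (fun s => A s i j) t) :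
    DifferentiableAt ℝ (fun s => (A s).det) t := by
  simp only [Matrix.det_apply, Units.smul_def, zsmul_eq_mul]
  exact DifferentiableAt.fun_sum fun σ _ => DifferentiableAt.const_mul
    (DifferentiableAt.fun_finsetProd fun i _ => h (σ i) i) _

lemma inv_dAt {A : ℝ → Matrix (Fin n) (Fin n) ℝ} {t : ℝ}
    (hd : ∀ s, (A s).det ≠ 0)
    (h : ∀ i j, DifferentiableAt ℝ (fun s => A s i j) t) :
    DifferentiableAt ℝ (fun s => (A s)⁻¹) t := by
  have key : ∀ i j, DifferentiableAt ℝ (fun s => (A s)⁻¹ i j) t := by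
    intro i j
    have : (fun s => (A s)⁻¹ i j) = fun s => ((A s).det)⁻¹ * (A s).adjugate i j := by
      funext s
      rw [Matrix.inv_def]
      simp [Ring.inverse_eq_inv']
    rw [this]
    have hadj : DifferentiableAt ℝ (fun s => (A s).adjugate i j) t := by
      simp only [Matrix.adjugate_apply]
      apply det_dAt
      intro k l
      rcases eq_or_ne k j with rfl | hk
      · simp [Matrix.updateRow_apply]
      · simp only [Matrix.updateRow_apply, if_neg hk]
        exact h k l
    exact ((det_dAt h).inv (hd t)).mul hadj
  exact differentiableAt_pi.2 fun i => differentiableAt_pi.2 fun j => key i j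

end Helpers

/-- Pointwise compatibility of the Rougée covariant derivative
`D_t ε = ε' - (1/2)(γ' γ⁻¹ ε + ε γ⁻¹ γ')` with the Rougée metric
`⟨ε¹, ε²⟩_γ = tr (γ⁻¹ ε¹ γ⁻¹ ε²)`. -/
theorem rougee_metric_compatibility (n : ℕ)
    (γ γ' ε₁ ε₁' ε₂ ε₂' : ℝ → Matrix (Fin n) (Fin n) ℝ)
    (hγpd : ∀ t, (γ t).PosDef) (hγs : ∀ t, (γ t).IsSymm)
    (hε₁s : ∀ t, (ε₁ t).IsSymm) (hε₂s : ∀ t, (ε₂ t).IsSymm)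
    (hγ : ∀ t, HasDerivAt γ (γ' t) t)
    (hε₁ : ∀ t, HasDerivAt ε₁ (ε₁' t) t)
    (hε₂ : ∀ t, HasDerivAt ε₂ (ε₂' t) t) :
    ∀ t, HasDerivAt (fun s => ((γ s)⁻¹ * ε₁ s * (γ s)⁻¹ * ε₂ s).trace)
      (((γ t)⁻¹ * (ε₁' t - (1 / 2 : ℝ) • (γ' t * (γ t)⁻¹ * ε₁ t + ε₁ t * (γ t)⁻¹ * γ' t))
          * (γ t)⁻¹ * ε₂ t).trace
        + ((γ t)⁻¹ * ε₁ t * (γ t)⁻¹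
          * (ε₂' t - (1 / 2 : ℝ) • (γ' t * (γ t)⁻¹ * ε₂ t + ε₂ t * (γ t)⁻¹ * γ' t))).trace)
      t := by
  intro t
  set g : ℝ → Matrix (Fin n) (Fin n) ℝ := fun s => (γ s)⁻¹ with hgdef
  have hdet : ∀ s, (γ s).det ≠ 0 := fun s => ne_of_gt (hγpd s).det_pos
  have hunit : ∀ s, IsUnit (γ s).det := fun s => isUnit_iff_ne_zero.2 (hdet s)
  have hgd : DifferentiableAt ℝ g t :=
    inv_dAt hdet (fun i j => (entry_hda (hγ t) i j).differentiableAt)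
  have hg0 : HasDerivAt g (deriv g t) t := hgd.hasDerivAt
  have hconst : (fun s => γ s * g s) = fun _ => (1 : Matrix (Fin n) (Fin n) ℝ) := by
    funext s; exact Matrix.mul_nonsing_inv _ (hunit s)
  have hzero : HasDerivAt (fun s => γ s * g s) 0 t := by
    rw [hconst]; exact hasDerivAt_const t 1
  have heq : γ' t * g t + γ t * deriv g t = 0 :=
    (mul_hda (hγ t) hg0).unique hzero
  have hginv : γ t * deriv g t = -(γ' t * g t) := by
    rw [eq_neg_iff_add_eq_zero, add_comm]; exact heq
  have hgval : deriv g t = -(g t * (γ' t * g t)) := by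
    have := congrArg (fun M => g t * M) hginv
    simpa [hgdef, ← mul_assoc, Matrix.nonsing_inv_mul _ (hunit t)] using this
  rw [hgval] at hg0
  have h1 := mul_hda hg0 (hε₁ t)
  have h2 := mul_hda h1 hg0
  have h3 := mul_hda h2 (hε₂ t)
  have htr := trace_hda h3
  convert htr using 1
  simp only [Matrix.mul_sub, Matrix.sub_mul, Matrix.mul_add, Matrix.add_mul,
    Matrix.mul_smul, Matrix.smul_mul, Matrix.neg_mul, Matrix.mul_neg,
    Matrix.trace_add, Matrix.trace_sub, Matrix.trace_smul, Matrix.trace_neg, mul_assoc]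
  have key : ((γ t)⁻¹ * (ε₁ t * ((γ t)⁻¹ * (ε₂ t * ((γ t)⁻¹ * γ' t))))).trace
      = ((γ t)⁻¹ * (γ' t * ((γ t)⁻¹ * (ε₁ t * ((γ t)⁻¹ * ε₂ t))))).trace := by
    rw [show (γ t)⁻¹ * (ε₁ t * ((γ t)⁻¹ * (ε₂ t * ((γ t)⁻¹ * γ' t))))
        = ((γ t)⁻¹ * (ε₁ t * ((γ t)⁻¹ * ε₂ t))) * ((γ t)⁻¹ * γ' t) by noncomm_ring,
      Matrix.trace_mul_comm]
    congr 1
    noncomm_ring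
  simp only [hgdef, smul_eq_mul]
  rw [key]
  ring
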